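/- arXiv:2110.10040 — 4 statements merged into one kernel-verified Lean document; each statement's English description precedes it below -/
import Mathlib

section
/- If u : [0,1] → ℝ satisfies the integral identity (W u)(ρ) := (1/2)∫₀¹ exp(-ξ|ρ-ρ'|) u(ρ') dρ' and u is an eigenfunction of W with eigenvalue λ, then u satisfies the ODE λ u'' = ξ(ξλ - 1) u on (0,1). -/
open MeasureTheory Real

theorem eigenfunction_satisfies_ode (ξ lam : ℝ) (hξ : 0 < ξ) (u : ℝ → ℝ)
    (hu : ContDiff ℝ 2 u)
    (heig : ∀ ρ ∈ Set.Icc (0 : ℝ) 1,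
      (1 / 2) * ∫ ρ' in (0 : ℝ)..1, Real.exp (-ξ * |ρ - ρ'|) * u ρ' = lam * u ρ) :
    ∀ ρ ∈ Set.Ioo (0 : ℝ) 1,
      lam * iteratedDeriv 2 u ρ = ξ * (ξ * lam - 1) * u ρ := by
  intro ρ hρ
  have hcu : Continuous u := hu.continuous
  -- the two auxiliary integrals
  set f₁ : ℝ → ℝ := fun s => Real.exp (ξ * s) * u s with hf₁
  set f₂ : ℝ → ℝ := fun s => Real.exp (-ξ * s) * u s with hf₂
  have hcf₁ : Continuous f₁ := (Real.continuous_exp.comp (continuous_const.mul continuous_id)).mul hcu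
  have hcf₂ : Continuous f₂ := (Real.continuous_exp.comp (continuous_const.mul continuous_id)).mul hcu
  set g : ℝ → ℝ := fun r => ∫ s in (0:ℝ)..r, f₁ s with hg
  set h : ℝ → ℝ := fun r => ∫ s in r..(1:ℝ), f₂ s with hh
  have hg' : ∀ r : ℝ, HasDerivAt g (f₁ r) r := by
    intro r
    exact intervalIntegral.integral_hasDerivAt_right (hcf₁.intervalIntegrable _ _)
      hcf₁.aestronglyMeasurable.stronglyMeasurableAtFilter hcf₁.continuousAt
  have hh' : ∀ r : ℝ, HasDerivAt h (-(f₂ r)) r := by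
    intro r
    exact intervalIntegral.integral_hasDerivAt_left (hcf₂.intervalIntegrable _ _)
      hcf₂.aestronglyMeasurable.stronglyMeasurableAtFilter hcf₂.continuousAt
  set Φ : ℝ → ℝ := fun r => (1/2) * (Real.exp (-ξ * r) * g r + Real.exp (ξ * r) * h r) with hΦ
  set Φ1 : ℝ → ℝ := fun r => (ξ/2) * (-(Real.exp (-ξ * r)) * g r + Real.exp (ξ * r) * h r) with hΦ1
  -- first derivative of Φ
  have hΦ' : ∀ r : ℝ, HasDerivAt Φ (Φ1 r) r := by
    intro r
    have e1 : HasDerivAt (fun r : ℝ => Real.exp (-ξ * r)) (-ξ * Real.exp (-ξ * r)) r := by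
      simpa [mul_comm] using ((hasDerivAt_id r).const_mul (-ξ)).exp
    have e2 : HasDerivAt (fun r : ℝ => Real.exp (ξ * r)) (ξ * Real.exp (ξ * r)) r := by
      simpa [mul_comm] using ((hasDerivAt_id r).const_mul ξ).exp
    have := (((e1.mul (hg' r)).add (e2.mul (hh' r))).const_mul (1/2 : ℝ))
    refine this.congr_deriv ?_
    simp only [hΦ1, hf₁, hf₂]
    ring
  -- second derivative of Φ
  have hΦ1' : ∀ r : ℝ, HasDerivAt Φ1 (ξ^2 * Φ r - ξ * u r) r := by
    intro r
    have e1 : HasDerivAt (fun r : ℝ => -(Real.exp (-ξ * r))) (ξ * Real.exp (-ξ * r)) r := by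
      have : HasDerivAt (fun r : ℝ => Real.exp (-ξ * r)) (-ξ * Real.exp (-ξ * r)) r := by
        simpa [mul_comm] using ((hasDerivAt_id r).const_mul (-ξ)).exp
      exact this.neg.congr_deriv (by ring)
    have e2 : HasDerivAt (fun r : ℝ => Real.exp (ξ * r)) (ξ * Real.exp (ξ * r)) r := by
      simpa [mul_comm] using ((hasDerivAt_id r).const_mul ξ).exp
    have := (((e1.mul (hg' r)).add (e2.mul (hh' r))).const_mul (ξ/2 : ℝ))
    refine this.congr_deriv ?_
    simp only [hΦ, hf₁, hf₂]
    have hE : Real.exp (-ξ * r) * Real.exp (ξ * r) = 1 := by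
      rw [← Real.exp_add]; norm_num
    linear_combination (-(ξ * u r)) * hE
  -- Φ equals lam * u on Icc 0 1
  have hkey : ∀ r ∈ Set.Icc (0:ℝ) 1, Φ r = lam * u r := by
    intro r hr
    rw [← heig r hr]
    have hcw : Continuous (fun ρ' => Real.exp (-ξ * |r - ρ'|) * u ρ') := by
      exact (Real.continuous_exp.comp (continuous_const.mul
        ((continuous_const.sub continuous_id).abs))).mul hcu
    have hsplit : (∫ ρ' in (0:ℝ)..1, Real.exp (-ξ * |r - ρ'|) * u ρ')
        = (∫ ρ' in (0:ℝ)..r, Real.exp (-ξ * |r - ρ'|) * u ρ')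
          + ∫ ρ' in r..(1:ℝ), Real.exp (-ξ * |r - ρ'|) * u ρ' := by
      rw [intervalIntegral.integral_add_adjacent_intervals
        (hcw.intervalIntegrable _ _) (hcw.intervalIntegrable _ _)]
    have h1 : (∫ ρ' in (0:ℝ)..r, Real.exp (-ξ * |r - ρ'|) * u ρ')
        = Real.exp (-ξ * r) * g r := by
      rw [hg, ← intervalIntegral.integral_const_mul]
      apply intervalIntegral.integral_congr
      intro s hs
      rw [Set.uIcc_of_le hr.1] at hs
      have habs : |r - s| = r - s := abs_of_nonneg (by linarith [hs.2])
      show Real.exp (-ξ * |r - s|) * u s = Real.exp (-ξ * r) * f₁ s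
      rw [habs, hf₁, ← mul_assoc, ← Real.exp_add]
      ring_nf
    have h2 : (∫ ρ' in r..(1:ℝ), Real.exp (-ξ * |r - ρ'|) * u ρ')
        = Real.exp (ξ * r) * h r := by
      rw [hh, ← intervalIntegral.integral_const_mul]
      apply intervalIntegral.integral_congr
      intro s hs
      rw [Set.uIcc_of_le hr.2] at hs
      have habs : |r - s| = s - r := by
        rw [abs_sub_comm]; exact abs_of_nonneg (by linarith [hs.1])
      show Real.exp (-ξ * |r - s|) * u s = Real.exp (ξ * r) * f₂ s
      rw [habs, hf₂, ← mul_assoc, ← Real.exp_add]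
      ring_nf
    rw [hsplit, h1, h2, hΦ]
  -- transfer to derivatives on the open interval
  have hnb : Set.Ioo (0:ℝ) 1 ∈ nhds ρ := (isOpen_Ioo).mem_nhds hρ
  set v : ℝ → ℝ := fun r => lam * u r with hv
  have hveq : ∀ r ∈ Set.Ioo (0:ℝ) 1, v r = Φ r := fun r hr =>
    (hkey r (Set.mem_Icc_of_Ioo hr)).symm
  have hv' : ∀ r ∈ Set.Ioo (0:ℝ) 1, HasDerivAt v (Φ1 r) r := by
    intro r hr
    refine (hΦ' r).congr_of_eventuallyEq ?_
    filter_upwards [(isOpen_Ioo).mem_nhds hr] with x hx using hveq x hx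
  -- deriv v equals Φ1 on Ioo
  have hdv : ∀ r ∈ Set.Ioo (0:ℝ) 1, deriv v r = Φ1 r := fun r hr => (hv' r hr).deriv
  have hv'' : HasDerivAt (deriv v) (ξ^2 * Φ ρ - ξ * u ρ) ρ := by
    refine (hΦ1' ρ).congr_of_eventuallyEq ?_
    filter_upwards [hnb] with x hx using hdv x hx
  -- relate deriv v to deriv u
  have hud : Differentiable ℝ u := hu.differentiable (by norm_num)
  have hdud : Differentiable ℝ (deriv u) := by
    have : ContDiff ℝ 1 (deriv u) := (contDiff_succ_iff_deriv.mp (by norm_num [hu] : ContDiff ℝ (1+1) u)).2.2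
    exact this.differentiable one_ne_zero
  have hdveq : deriv v = fun r => lam * deriv u r := by
    funext r
    exact deriv_const_mul lam (hud r)
  have hfinal : lam * deriv (deriv u) ρ = ξ^2 * Φ ρ - ξ * u ρ := by
    have h1 : HasDerivAt (fun r => lam * deriv u r) (lam * deriv (deriv u) ρ) ρ :=
      ((hdud ρ).hasDerivAt).const_mul lam
    rw [hdveq] at hv''
    exact h1.unique hv''
  have h2 : iteratedDeriv 2 u ρ = deriv (deriv u) ρ := by
    rw [iteratedDeriv_succ, iteratedDeriv_one]
  rw [h2, hfinal, hkey ρ (Set.mem_Icc_of_Ioo hρ)]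
  ring
end

section
/- The integral operator W on L²(0,1) with kernel (1/2)exp(-ξ|ρ-ρ'|), ξ > 0, has trivial kernel: if W u = 0 almost everywhere then u = 0 almost everywhere. -/
open MeasureTheory Real

lemma sinh_sub_sinh_abs_le {a b M : ℝ} (ha : |a| ≤ M) (hb : |b| ≤ M) :
    |Real.sinh a - Real.sinh b| ≤ Real.cosh M * |a - b| := by
  have hM : 0 ≤ M := le_trans (abs_nonneg a) ha
  have hd : ∀ x ∈ Set.Icc (-M) M, HasDerivWithinAt Real.sinh (Real.cosh x) (Set.Icc (-M) M) x :=
    fun x _ => (Real.hasDerivAt_sinh x).hasDerivWithinAt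
  have hbd : ∀ x ∈ Set.Icc (-M) M, ‖Real.cosh x‖ ≤ Real.cosh M := by
    intro x hx
    rw [Real.norm_eq_abs, abs_of_pos (Real.cosh_pos x)]
    exact Real.cosh_le_cosh.2 (by rw [abs_of_nonneg hM]; exact abs_le.2 ⟨hx.1, hx.2⟩)
  have := Convex.norm_image_sub_le_of_norm_hasDerivWithin_le hd hbd (convex_Icc _ _)
      (Set.mem_Icc.2 ⟨(abs_le.1 hb).1, (abs_le.1 hb).2⟩)
      (Set.mem_Icc.2 ⟨(abs_le.1 ha).1, (abs_le.1 ha).2⟩)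
  simpa [Real.norm_eq_abs] using this

noncomputable def ubF (u : ℝ → ℝ) : ℝ → ℝ := (Set.Ioo (0:ℝ) 1).indicator u

lemma keyInt (u : ℝ → ℝ) (hub : Integrable (ubF u) volume) {k : ℝ → ℝ}
    (hk : AEStronglyMeasurable k volume) {C : ℝ}
    (hC : ∀ s ∈ Set.Ioo (0:ℝ) 1, |k s| ≤ C) :
    Integrable (fun s => k s * ubF u s) volume := by
  have hui : IntegrableOn u (Set.Ioo (0:ℝ) 1) volume :=
    (integrable_indicator_iff measurableSet_Ioo).1 hub
  have heq : (fun s => k s * ubF u s)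
      = (Set.Ioo (0:ℝ) 1).indicator (fun s => k s * u s) := by
    funext s
    by_cases h : s ∈ Set.Ioo (0:ℝ) 1 <;>
      simp [ubF, Set.indicator_of_mem, Set.indicator_of_notMem, h]
  rw [heq, integrable_indicator_iff measurableSet_Ioo]
  exact Integrable.bdd_mul hui hk.restrict
    ((ae_restrict_iff' measurableSet_Ioo).2 (ae_of_all _ fun s hs => by
      rw [Real.norm_eq_abs]; exact hC s hs))

noncomputable def fF (ξ : ℝ) (u : ℝ → ℝ) (ρ : ℝ) : ℝ :=
  ∫ s, Real.exp (-ξ * |ρ - s|) * ubF u s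

noncomputable def gF (ξ : ℝ) (u : ℝ → ℝ) (s : ℝ) : ℝ := Real.exp (ξ * s) * ubF u s

noncomputable def DF (ξ : ℝ) (u : ℝ → ℝ) (ρ : ℝ) : ℝ :=
  ∫ s, max 0 (2 * Real.sinh (ξ * (s - ρ))) * ubF u s

noncomputable def SF (ξ : ℝ) (u : ℝ → ℝ) (ρ : ℝ) : ℝ :=
  ∫ s, (if ρ < s then 2 * Real.cosh (ξ * (s - ρ)) else 0) * ubF u s

noncomputable def TF (ξ : ℝ) (u : ℝ → ℝ) (ρ : ℝ) : ℝ :=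
  ∫ s, (if ρ < s then Real.exp (ξ * (s - ρ)) else 0) * ubF u s

lemma fF_cont {ξ : ℝ} (hξ : 0 < ξ) (u : ℝ → ℝ) (hub : Integrable (ubF u) volume) :
    Continuous (fF ξ u) := by
  apply continuous_of_dominated (bound := fun s => |ubF u s|)
  · intro ρ
    have hk : Continuous fun s : ℝ => Real.exp (-ξ * |ρ - s|) := by
      apply Real.continuous_exp.comp
      exact continuous_const.mul (continuous_const.sub continuous_id).abs
    exact hk.aestronglyMeasurable.mul hub.aestronglyMeasurable
  · intro ρ
    refine ae_of_all _ fun s => ?_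
    rw [Real.norm_eq_abs, abs_mul, Real.abs_exp]
    calc Real.exp (-ξ * |ρ - s|) * |ubF u s| ≤ 1 * |ubF u s| := by
          apply mul_le_mul_of_nonneg_right _ (abs_nonneg _)
          have : -ξ * |ρ - s| ≤ 0 := by
            have := abs_nonneg (ρ - s); nlinarith [hξ.le]
          simpa using Real.exp_le_one_iff.2 this
      _ = |ubF u s| := one_mul _
  · exact hub.abs
  · refine ae_of_all _ fun s => ?_
    have hk : Continuous fun ρ : ℝ => Real.exp (-ξ * |ρ - s|) := by
      apply Real.continuous_exp.comp
      exact continuous_const.mul (continuous_id.sub continuous_const).abs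
    exact hk.mul continuous_const

lemma max_sinh_eq (t : ℝ) : max 0 (2 * Real.sinh t) = Real.exp t - Real.exp (-|t|) := by
  rcases le_or_gt 0 t with h | h
  · rw [abs_of_nonneg h, max_eq_right (by nlinarith [Real.sinh_nonneg_iff.2 h]), Real.sinh_eq]; ring
  · rw [abs_of_neg h, neg_neg, max_eq_left, sub_self]
    nlinarith [Real.sinh_neg_iff.2 h]

lemma gF_int {ξ : ℝ} (hξ : 0 < ξ) (u : ℝ → ℝ) (hub : Integrable (ubF u) volume) :
    Integrable (gF ξ u) volume := by
  apply keyInt u hub (Continuous.aestronglyMeasurable (by continuity)) (C := Real.exp ξ)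
  intro s hs
  rw [Real.abs_exp]
  exact Real.exp_le_exp.2 (by nlinarith [hs.2, hξ.le])

lemma fker_int {ξ : ℝ} (hξ : 0 < ξ) (u : ℝ → ℝ) (hub : Integrable (ubF u) volume) (ρ : ℝ) :
    Integrable (fun s => Real.exp (-ξ * |ρ - s|) * ubF u s) volume := by
  apply keyInt u hub (Continuous.aestronglyMeasurable (by continuity)) (C := 1)
  intro s _
  rw [Real.abs_exp]
  apply Real.exp_le_one_iff.2
  have := abs_nonneg (ρ - s); nlinarith [hξ.le]

lemma DF_eq {ξ : ℝ} (hξ : 0 < ξ) (u : ℝ → ℝ) (hub : Integrable (ubF u) volume) (ρ : ℝ) :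
    DF ξ u ρ = Real.exp (-(ξ * ρ)) * (∫ s, gF ξ u s) - fF ξ u ρ := by
  have h1 : ∀ s, max 0 (2 * Real.sinh (ξ * (s - ρ))) * ubF u s
      = Real.exp (-(ξ * ρ)) * gF ξ u s - Real.exp (-ξ * |ρ - s|) * ubF u s := by
    intro s
    rw [max_sinh_eq]
    have e1 : Real.exp (ξ * (s - ρ)) = Real.exp (-(ξ * ρ)) * Real.exp (ξ * s) := by
      rw [← Real.exp_add]; ring_nf
    have e2 : -|ξ * (s - ρ)| = -ξ * |ρ - s| := by
      rw [abs_mul, abs_of_pos hξ, abs_sub_comm]; ring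
    rw [e1, e2, gF]; ring
  unfold DF
  simp_rw [h1]
  rw [integral_sub ((gF_int hξ u hub).const_mul _) (fker_int hξ u hub ρ),
    MeasureTheory.integral_const_mul]
  rfl

lemma mem_Ioo_of_ub_ne {u : ℝ → ℝ} {s : ℝ} (h : ubF u s ≠ 0) : s ∈ Set.Ioo (0:ℝ) 1 := by
  by_contra hs
  exact h (Set.indicator_of_notMem hs u)

lemma ae_ne (c : ℝ) : ∀ᵐ s : ℝ, s ≠ c := by
  have h : {s : ℝ | ¬ s ≠ c} = {c} := by ext s; simp
  rw [ae_iff, h]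
  exact measure_singleton c

lemma DF_hasDeriv {ξ : ℝ} (hξ : 0 < ξ) (u : ℝ → ℝ) (hub : Integrable (ubF u) volume)
    {ρ₀ : ℝ} (hρ₀ : ρ₀ ∈ Set.Ioo (0:ℝ) 1) :
    HasDerivAt (DF ξ u) (-ξ * SF ξ u ρ₀) ρ₀ := by
  have hcosh1 : (1:ℝ) ≤ Real.cosh (3*ξ) := Real.one_le_cosh _
  set F' : ℝ → ℝ :=
    fun s => (if ρ₀ < s then -(2*ξ) * Real.cosh (ξ*(s-ρ₀)) else 0) * ubF u s with hF'
  have key := hasDerivAt_integral_of_dominated_loc_of_lip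
    (F := fun ρ s => max 0 (2 * Real.sinh (ξ * (s - ρ))) * ubF u s) (F' := F') (x₀ := ρ₀)
    (bound := fun s => 2*ξ*Real.cosh (3*ξ) * |ubF u s|) (s := Metric.ball ρ₀ 1) (μ := volume)
    (Metric.ball_mem_nhds ρ₀ one_pos)
    (Filter.Eventually.of_forall fun ρ =>
      (Continuous.aestronglyMeasurable (continuous_const.max (continuous_const.mul
        (Real.continuous_sinh.comp (continuous_const.mul
          (continuous_id.sub continuous_const)))))).mul hub.aestronglyMeasurable)
    ?_ ?_ ?_ ?_ ?_
  · -- conclude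
    have hval : (∫ s, F' s) = -ξ * SF ξ u ρ₀ := by
      unfold SF
      rw [← MeasureTheory.integral_const_mul]
      congr 1
      funext s
      by_cases h : ρ₀ < s
      · simp only [hF', if_pos h]; ring
      · simp only [hF', if_neg h]; ring
    have := key.2
    rw [hval] at this
    exact this
  · -- integrability at ρ₀
    apply keyInt u hub (Continuous.aestronglyMeasurable (continuous_const.max
      (continuous_const.mul (Real.continuous_sinh.comp (continuous_const.mul
        (continuous_id.sub continuous_const))))))
      (C := 2*Real.cosh (3*ξ) * (3*ξ))
    intro s hs
    have ht : |ξ * (s - ρ₀)| ≤ 3*ξ := by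
      rw [abs_mul, abs_of_pos hξ]
      have : |s - ρ₀| ≤ 3 := by
        rw [abs_le]; constructor <;> nlinarith [hs.1, hs.2, hρ₀.1, hρ₀.2]
      nlinarith
    have hsinh := sinh_sub_sinh_abs_le (b := 0) (M := 3*ξ) ht (by simp; positivity)
    simp only [Real.sinh_zero, sub_zero] at hsinh
    have h1 : |max 0 (2 * Real.sinh (ξ * (s - ρ₀)))| ≤ |2 * Real.sinh (ξ * (s - ρ₀))| := by
      rw [abs_of_nonneg (le_max_left _ _)]
      exact max_le (abs_nonneg _) (le_abs_self _)
    rw [abs_mul] at h1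
    simp only [abs_two] at h1
    calc |max 0 (2 * Real.sinh (ξ * (s - ρ₀)))| ≤ 2 * |Real.sinh (ξ * (s - ρ₀))| := h1
      _ ≤ 2 * (Real.cosh (3*ξ) * |ξ * (s - ρ₀)|) := by nlinarith
      _ ≤ 2*Real.cosh (3*ξ) * (3*ξ) := by nlinarith [Real.cosh_pos (x := 3*ξ), abs_nonneg (ξ * (s - ρ₀))]
  · -- F' measurable
    apply AEStronglyMeasurable.mul _ hub.aestronglyMeasurable
    apply Measurable.aestronglyMeasurable
    exact Measurable.ite measurableSet_Ioi
      ((continuous_const.mul (Real.continuous_cosh.comp (continuous_const.mul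
        (continuous_id.sub continuous_const)))).measurable) measurable_const
  · -- Lipschitz
    refine ae_of_all _ fun s => ?_
    rw [lipschitzOnWith_iff_dist_le_mul]
    intro x hx y hy
    rw [Real.dist_eq, Real.dist_eq]
    have hcoe : ((Real.nnabs (2*ξ*Real.cosh (3*ξ) * |ubF u s|)) : ℝ)
        = 2*ξ*Real.cosh (3*ξ) * |ubF u s| := by
      rw [Real.coe_nnabs, abs_of_nonneg (by positivity)]
    rw [hcoe]
    by_cases hzero : ubF u s = 0
    · simp [hzero, abs_nonneg]
    · have hs : s ∈ Set.Ioo (0:ℝ) 1 := mem_Ioo_of_ub_ne hzero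
      rw [Metric.mem_ball, Real.dist_eq] at hx hy
      have habs : ∀ z : ℝ, |z - ρ₀| < 1 → |ξ * (s - z)| ≤ 3*ξ := by
        intro z hz
        rw [abs_mul, abs_of_pos hξ]
        have : |s - z| ≤ 3 := by
          rw [abs_lt] at hz
          rw [abs_le]
          constructor <;> nlinarith [hs.1, hs.2, hρ₀.1, hρ₀.2, hz.1, hz.2]
        nlinarith
      have hsinh := sinh_sub_sinh_abs_le (M := 3*ξ) (habs x hx) (habs y hy)
      have hmax : |max 0 (2 * Real.sinh (ξ * (s - x))) - max 0 (2 * Real.sinh (ξ * (s - y)))|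
          ≤ |2 * Real.sinh (ξ * (s - x)) - 2 * Real.sinh (ξ * (s - y))| := by
        rw [max_comm 0 (2 * Real.sinh (ξ * (s - x))), max_comm 0 (2 * Real.sinh (ξ * (s - y)))]
        exact abs_max_sub_max_le_abs _ _ _
      have hdiff : |ξ * (s - x) - ξ * (s - y)| = ξ * |x - y| := by
        rw [show ξ * (s - x) - ξ * (s - y) = ξ * (y - x) by ring, abs_mul, abs_of_pos hξ,
          abs_sub_comm]
      calc |max 0 (2 * Real.sinh (ξ * (s - x))) * ubF u s
            - max 0 (2 * Real.sinh (ξ * (s - y))) * ubF u s|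
          = |max 0 (2 * Real.sinh (ξ * (s - x))) - max 0 (2 * Real.sinh (ξ * (s - y)))|
            * |ubF u s| := by rw [← sub_mul, abs_mul]
        _ ≤ |2 * Real.sinh (ξ * (s - x)) - 2 * Real.sinh (ξ * (s - y))| * |ubF u s| := by
            apply mul_le_mul_of_nonneg_right hmax (abs_nonneg _)
        _ = 2 * |Real.sinh (ξ * (s - x)) - Real.sinh (ξ * (s - y))| * |ubF u s| := by
            rw [show (2:ℝ) * Real.sinh (ξ * (s - x)) - 2 * Real.sinh (ξ * (s - y))
              = 2 * (Real.sinh (ξ * (s - x)) - Real.sinh (ξ * (s - y))) by ring, abs_mul, abs_two]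
        _ ≤ 2*ξ*Real.cosh (3*ξ) * |ubF u s| * |x - y| := by
            rw [hdiff] at hsinh
            nlinarith [abs_nonneg (ubF u s), abs_nonneg (x - y),
              Real.cosh_pos (x := 3*ξ), abs_nonneg (Real.sinh (ξ * (s - x)) - Real.sinh (ξ * (s - y)))]
  · -- bound integrable
    exact hub.abs.const_mul _
  · -- a.e. differentiability
    filter_upwards [ae_ne ρ₀] with s hs
    rcases lt_or_gt_of_ne hs with h | h
    · -- s < ρ₀
      have hF's : F' s = 0 := by simp only [hF', if_neg (not_lt.2 h.le), zero_mul]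
      rw [hF's]
      apply HasDerivAt.congr_of_eventuallyEq (hasDerivAt_const ρ₀ (0:ℝ))
      filter_upwards [Ioi_mem_nhds h] with ρ hρ
      have : Real.sinh (ξ * (s - ρ)) ≤ 0 := by
        rw [show (0:ℝ) = Real.sinh 0 by simp]
        exact Real.sinh_le_sinh.2 (by nlinarith [Set.mem_Ioi.1 hρ])
      rw [max_eq_left (by nlinarith), zero_mul]
    · -- s > ρ₀
      have hF's : F' s = 2 * (Real.cosh (ξ*(s-ρ₀)) * (-ξ)) * ubF u s := by
        simp only [hF', if_pos h]; ring_nf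
      rw [hF's]
      have h1 : HasDerivAt (fun ρ : ℝ => ξ*(s-ρ)) (-ξ) ρ₀ := by
        simpa using ((hasDerivAt_id ρ₀).const_sub s).const_mul ξ
      have hd := ((h1.sinh).const_mul 2).mul_const (ubF u s)
      apply HasDerivAt.congr_of_eventuallyEq hd
      filter_upwards [Iio_mem_nhds h] with ρ hρ
      have : (0:ℝ) ≤ Real.sinh (ξ * (s - ρ)) := by
        rw [show (0:ℝ) = Real.sinh 0 by simp]
        exact Real.sinh_le_sinh.2 (by nlinarith [Set.mem_Iio.1 hρ])
      rw [max_eq_right (by nlinarith)]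

lemma SF_ker_int {ξ : ℝ} (hξ : 0 < ξ) (u : ℝ → ℝ) (hub : Integrable (ubF u) volume)
    {ρ : ℝ} (hρ : ρ ∈ Set.Ioo (0:ℝ) 1) :
    Integrable (fun s => (if ρ < s then 2 * Real.cosh (ξ*(s-ρ)) else 0) * ubF u s) volume := by
  apply keyInt u hub (C := 2 * Real.cosh (3*ξ))
  · apply Measurable.aestronglyMeasurable
    exact Measurable.ite measurableSet_Ioi
      ((continuous_const.mul (Real.continuous_cosh.comp (continuous_const.mul
        (continuous_id.sub continuous_const)))).measurable) measurable_const
  · intro s hs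
    by_cases h : ρ < s
    · rw [if_pos h, abs_of_pos (by positivity)]
      have h1 : |ξ*(s-ρ)| ≤ |3*ξ| := by
        rw [abs_mul, abs_of_pos hξ, abs_mul, abs_of_pos (by norm_num : (0:ℝ) < 3),
          abs_of_pos hξ]
        have : |s - ρ| ≤ 3 := by
          rw [abs_le]; constructor <;> nlinarith [hs.1, hs.2, hρ.1, hρ.2]
        nlinarith
      nlinarith [Real.cosh_le_cosh.2 h1]
    · rw [if_neg h]
      simp only [abs_zero]
      positivity

lemma DF_ker_int {ξ : ℝ} (hξ : 0 < ξ) (u : ℝ → ℝ) (hub : Integrable (ubF u) volume)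
    {ρ : ℝ} (hρ : ρ ∈ Set.Ioo (0:ℝ) 1) :
    Integrable (fun s => max 0 (2 * Real.sinh (ξ*(s-ρ))) * ubF u s) volume := by
  apply keyInt u hub (Continuous.aestronglyMeasurable (continuous_const.max
      (continuous_const.mul (Real.continuous_sinh.comp (continuous_const.mul
        (continuous_id.sub continuous_const))))))
    (C := 2*Real.cosh (3*ξ) * (3*ξ))
  intro s hs
  have ht : |ξ * (s - ρ)| ≤ 3*ξ := by
    rw [abs_mul, abs_of_pos hξ]
    have : |s - ρ| ≤ 3 := by
      rw [abs_le]; constructor <;> nlinarith [hs.1, hs.2, hρ.1, hρ.2]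
    nlinarith
  have hsinh := sinh_sub_sinh_abs_le (b := 0) (M := 3*ξ) ht (by simp; positivity)
  simp only [Real.sinh_zero, sub_zero] at hsinh
  have h1 : |max 0 (2 * Real.sinh (ξ * (s - ρ)))| ≤ |2 * Real.sinh (ξ * (s - ρ))| := by
    rw [abs_of_nonneg (le_max_left _ _)]
    exact max_le (abs_nonneg _) (le_abs_self _)
  rw [abs_mul, abs_two] at h1
  calc |max 0 (2 * Real.sinh (ξ * (s - ρ)))| ≤ 2 * |Real.sinh (ξ * (s - ρ))| := h1
    _ ≤ 2 * (Real.cosh (3*ξ) * |ξ * (s - ρ)|) := by nlinarith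
    _ ≤ 2*Real.cosh (3*ξ) * (3*ξ) := by
        nlinarith [Real.cosh_pos (x := 3*ξ), abs_nonneg (ξ * (s - ρ))]

lemma TF_eq {ξ : ℝ} (hξ : 0 < ξ) (u : ℝ → ℝ) (hub : Integrable (ubF u) volume)
    {ρ : ℝ} (hρ : ρ ∈ Set.Ioo (0:ℝ) 1) :
    2 * TF ξ u ρ = DF ξ u ρ + SF ξ u ρ := by
  unfold TF DF SF
  rw [← MeasureTheory.integral_const_mul,
    ← integral_add (DF_ker_int hξ u hub hρ) (SF_ker_int hξ u hub hρ)]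
  congr 1
  funext s
  by_cases h : ρ < s
  · rw [if_pos h, if_pos h]
    have ht : (0:ℝ) ≤ ξ * (s - ρ) := by nlinarith
    rw [max_eq_right (by nlinarith [Real.sinh_nonneg_iff.2 ht])]
    have := Real.sinh_add_cosh (ξ * (s - ρ))
    linear_combination (-(2 * ubF u s)) * this
  · rw [if_neg h, if_neg h]
    have ht : ξ * (s - ρ) ≤ 0 := by nlinarith [not_lt.1 h]
    rw [max_eq_left (by nlinarith [Real.sinh_le_sinh.2 ht, Real.sinh_zero])]
    ring

theorem integral_operator_trivial_kernel (ξ : ℝ) (hξ : 0 < ξ) (u : ℝ → ℝ)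
    (hu : MemLp u 2 (volume.restrict (Set.Ioo (0 : ℝ) 1)))
    (hW : ∀ᵐ ρ ∂(volume.restrict (Set.Ioo (0 : ℝ) 1)),
      ∫ ρ' in Set.Ioo (0 : ℝ) 1, (1 / 2) * Real.exp (-ξ * |ρ - ρ'|) * u ρ' = 0) :
    ∀ᵐ ρ ∂(volume.restrict (Set.Ioo (0 : ℝ) 1)), u ρ = 0 := by
  haveI : Fact (volume (Set.Ioo (0:ℝ) 1) < ⊤) := ⟨measure_Ioo_lt_top⟩
  have hui : Integrable u (volume.restrict (Set.Ioo (0:ℝ) 1)) := hu.integrable one_le_two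
  have hub : Integrable (ubF u) volume := (integrable_indicator_iff measurableSet_Ioo).2 hui
  have hg_int := gF_int hξ u hub
  -- f is a.e. zero on (0,1)
  have hfae : ∀ᵐ ρ ∂(volume.restrict (Set.Ioo (0:ℝ) 1)), fF ξ u ρ = 0 := by
    filter_upwards [hW] with ρ hρ
    have h1 : fF ξ u ρ = ∫ s in Set.Ioo (0:ℝ) 1, Real.exp (-ξ*|ρ-s|) * u s := by
      unfold fF
      rw [← integral_indicator measurableSet_Ioo]
      congr 1; funext s
      by_cases h : s ∈ Set.Ioo (0:ℝ) 1
      · rw [Set.indicator_of_mem h, ubF, Set.indicator_of_mem h]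
      · rw [Set.indicator_of_notMem h, ubF, Set.indicator_of_notMem h, mul_zero]
    simp_rw [mul_assoc] at hρ
    rw [MeasureTheory.integral_const_mul] at hρ
    rw [h1]
    have h12 : (1/2 : ℝ) ≠ 0 := by norm_num
    rcases mul_eq_zero.1 hρ with h | h
    · exact absurd h h12
    · exact h
  -- f is zero on Ioo
  have hfc := fF_cont hξ u hub
  have hIoo : ∀ ρ ∈ Set.Ioo (0:ℝ) 1, fF ξ u ρ = 0 := by
    have h0 : volume {ρ | ¬ (ρ ∈ Set.Ioo (0:ℝ) 1 → fF ξ u ρ = 0)} = 0 := by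
      have := (ae_restrict_iff' measurableSet_Ioo).1 hfae
      rw [ae_iff] at this; exact this
    by_contra hcon
    push_neg at hcon
    obtain ⟨ρ, hρ, hne⟩ := hcon
    have hopen : IsOpen ({ρ | fF ξ u ρ ≠ 0} ∩ Set.Ioo (0:ℝ) 1) := by
      have : {ρ | fF ξ u ρ ≠ 0} = fF ξ u ⁻¹' ({0}ᶜ) := rfl
      exact (this ▸ (isOpen_compl_singleton.preimage hfc)).inter isOpen_Ioo
    have hpos := hopen.measure_pos volume ⟨ρ, hne, hρ⟩
    have hsub : ({ρ | fF ξ u ρ ≠ 0} ∩ Set.Ioo (0:ℝ) 1)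
        ⊆ {ρ | ¬ (ρ ∈ Set.Ioo (0:ℝ) 1 → fF ξ u ρ = 0)} := by
      intro x hx
      simp only [Set.mem_setOf_eq, Classical.not_imp]
      exact ⟨hx.2, hx.1⟩
    exact absurd (measure_mono_null hsub h0) hpos.ne'
  -- f is zero on Icc
  have hIcc : ∀ ρ ∈ Set.Icc (0:ℝ) 1, fF ξ u ρ = 0 := by
    have heq : Set.EqOn (fF ξ u) (fun _ => 0) (closure (Set.Ioo (0:ℝ) 1)) :=
      Set.EqOn.closure (fun ρ hρ => hIoo ρ hρ) hfc continuous_const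
    intro ρ hρ
    have hcl : closure (Set.Ioo (0:ℝ) 1) = Set.Icc 0 1 := closure_Ioo (by norm_num)
    exact heq (by rw [hcl]; exact hρ)
  -- total integral of gF is zero
  have hFtot : (∫ s, gF ξ u s) = 0 := by
    have h1 : fF ξ u 1 = Real.exp (-ξ) * ∫ s, gF ξ u s := by
      unfold fF
      rw [← MeasureTheory.integral_const_mul]
      congr 1; funext s
      by_cases h : s ∈ Set.Ioo (0:ℝ) 1
      · have habs : |(1:ℝ) - s| = 1 - s := abs_of_pos (by linarith [h.2])
        rw [habs, gF, show -ξ*(1-s) = -ξ + ξ*s by ring, Real.exp_add]; ring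
      · rw [gF, ubF, Set.indicator_of_notMem h, mul_zero, mul_zero, mul_zero]
    rw [hIcc 1 (by norm_num)] at h1
    rcases mul_eq_zero.1 h1.symm with h | h
    · exact absurd h (Real.exp_ne_zero _)
    · exact h
  -- SF is zero on Ioo
  have hSF : ∀ ρ ∈ Set.Ioo (0:ℝ) 1, SF ξ u ρ = 0 := by
    intro ρ₀ hρ₀
    have hD := DF_hasDeriv hξ u hub hρ₀
    have hDzero : HasDerivAt (DF ξ u) 0 ρ₀ := by
      apply HasDerivAt.congr_of_eventuallyEq (hasDerivAt_const ρ₀ (0:ℝ))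
      filter_upwards [isOpen_Ioo.mem_nhds hρ₀] with ρ hρ
      rw [DF_eq hξ u hub ρ, hFtot, mul_zero, zero_sub, hIoo ρ hρ, neg_zero]
    have huniq := hD.unique hDzero
    have hξ' : -ξ ≠ 0 := neg_ne_zero.2 hξ.ne'
    rcases mul_eq_zero.1 huniq with h | h
    · exact absurd h hξ'
    · exact h
  -- TF is zero on Ioo
  have hTF : ∀ ρ ∈ Set.Ioo (0:ℝ) 1, TF ξ u ρ = 0 := by
    intro ρ hρ
    have h1 := TF_eq hξ u hub hρ
    rw [DF_eq hξ u hub ρ, hFtot, mul_zero, zero_sub, hIoo ρ hρ, neg_zero, hSF ρ hρ] at h1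
    linarith
  -- integral of gF over Ioi ρ is zero for ρ ∈ (0,1)
  have hIoiIoo : ∀ ρ ∈ Set.Ioo (0:ℝ) 1, ∫ s in Set.Ioi ρ, gF ξ u s = 0 := by
    intro ρ hρ
    have h1 : ∫ s in Set.Ioi ρ, gF ξ u s
        = ∫ s, (if ρ < s then Real.exp (ξ*s) else 0) * ubF u s := by
      rw [← integral_indicator measurableSet_Ioi]
      congr 1; funext s
      by_cases h : ρ < s
      · rw [Set.indicator_of_mem (Set.mem_Ioi.2 h), if_pos h]; rfl
      · rw [Set.indicator_of_notMem (by simpa using h), if_neg h, zero_mul]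
    have h2 : (fun s => (if ρ < s then Real.exp (ξ*s) else 0) * ubF u s)
        = fun s => Real.exp (ξ*ρ) * ((if ρ < s then Real.exp (ξ*(s-ρ)) else 0) * ubF u s) := by
      funext s
      by_cases h : ρ < s
      · rw [if_pos h, if_pos h, show ξ*s = ξ*ρ + ξ*(s-ρ) by ring, Real.exp_add]; ring
      · rw [if_neg h, if_neg h]; ring
    rw [h1, h2, MeasureTheory.integral_const_mul,
      show (∫ s, (if ρ < s then Real.exp (ξ*(s-ρ)) else 0) * ubF u s) = TF ξ u ρ from rfl,
      hTF ρ hρ, mul_zero]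
  -- integral of gF over Ioi ρ is zero for all ρ
  have hIoiAll : ∀ ρ : ℝ, ∫ s in Set.Ioi ρ, gF ξ u s = 0 := by
    intro ρ
    rcases le_or_gt 1 ρ with h | h
    · apply setIntegral_eq_zero_of_forall_eq_zero
      intro s hs
      have hnm : s ∉ Set.Ioo (0:ℝ) 1 :=
        fun hmem => absurd hmem.2 (not_lt.2 (le_trans h (Set.mem_Ioi.1 hs).le))
      rw [gF, ubF, Set.indicator_of_notMem hnm, mul_zero]
    rcases lt_or_ge 0 ρ with h0 | h0
    · exact hIoiIoo ρ ⟨h0, h⟩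
    · have hsplit := MeasureTheory.integral_add_compl (measurableSet_Iic (a := ρ)) hg_int
      have hIic : ∫ s in Set.Iic ρ, gF ξ u s = 0 := by
        apply setIntegral_eq_zero_of_forall_eq_zero
        intro s hs
        have hnm : s ∉ Set.Ioo (0:ℝ) 1 :=
          fun hmem => absurd hmem.1 (not_lt.2 (le_trans (Set.mem_Iic.1 hs) h0))
        rw [gF, ubF, Set.indicator_of_notMem hnm, mul_zero]
      rw [Set.compl_Iic, hIic, zero_add, hFtot] at hsplit
      exact hsplit
  -- integral over Ioc is zero
  have hIoc : ∀ a b : ℝ, a < b → ∫ s in Set.Ioc a b, gF ξ u s = 0 := by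
    intro a b hab
    have hdisj : Disjoint (Set.Ioc a b) (Set.Ioi b) := by
      rw [Set.disjoint_left]
      intro x hx hx'
      exact absurd (Set.mem_Ioi.1 hx') (not_lt.2 hx.2)
    have hu2 := MeasureTheory.setIntegral_union hdisj measurableSet_Ioi
      hg_int.integrableOn hg_int.integrableOn
    rw [Set.Ioc_union_Ioi_eq_Ioi hab.le, hIoiAll a, hIoiAll b, add_zero] at hu2
    exact hu2.symm
  -- measure-theoretic conclusion
  have hgm : AEMeasurable (gF ξ u) volume := hg_int.aemeasurable
  have hm1 : AEMeasurable (fun s => ENNReal.ofReal (gF ξ u s)) volume :=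
    ENNReal.measurable_ofReal.comp_aemeasurable hgm
  have hm2 : AEMeasurable (fun s => ENNReal.ofReal (-gF ξ u s)) volume :=
    ENNReal.measurable_ofReal.comp_aemeasurable hgm.neg
  set ν₁ := volume.withDensity (fun s => ENNReal.ofReal (gF ξ u s)) with hν₁
  set ν₂ := volume.withDensity (fun s => ENNReal.ofReal (-gF ξ u s)) with hν₂
  haveI : IsFiniteMeasure ν₁ := by
    constructor
    rw [hν₁, withDensity_apply _ MeasurableSet.univ, Measure.restrict_univ]
    exact hg_int.lintegral_lt_top
  haveI : IsFiniteMeasure ν₂ := by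
    constructor
    rw [hν₂, withDensity_apply _ MeasurableSet.univ, Measure.restrict_univ]
    exact hg_int.neg.lintegral_lt_top
  have hext : ν₁ = ν₂ := by
    apply MeasureTheory.Measure.ext_of_Ioc
    intro a b hab
    rw [hν₁, hν₂, withDensity_apply _ measurableSet_Ioc, withDensity_apply _ measurableSet_Ioc]
    have heq2 := integral_eq_lintegral_pos_part_sub_lintegral_neg_part (hg_int.restrict (s := Set.Ioc a b))
    rw [hIoc a b hab] at heq2
    have hXfin : ∫⁻ s in Set.Ioc a b, ENNReal.ofReal (gF ξ u s) ∂volume ≠ ⊤ :=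
      ne_top_of_le_ne_top hg_int.lintegral_lt_top.ne (setLIntegral_le_lintegral _ _)
    have hYfin : ∫⁻ s in Set.Ioc a b, ENNReal.ofReal (-gF ξ u s) ∂volume ≠ ⊤ :=
      ne_top_of_le_ne_top hg_int.neg.lintegral_lt_top.ne (setLIntegral_le_lintegral _ _)
    exact (ENNReal.toReal_eq_toReal_iff' hXfin hYfin).1 (by linarith)
  have hae : (fun s => ENNReal.ofReal (gF ξ u s))
      =ᵐ[volume] (fun s => ENNReal.ofReal (-gF ξ u s)) := by
    refine (withDensity_eq_iff hm1 hm2 hg_int.lintegral_lt_top.ne).1 hext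
  have hg0 : ∀ᵐ s ∂(volume : Measure ℝ), gF ξ u s = 0 := by
    filter_upwards [hae] with s hs
    by_contra hne
    rcases lt_or_gt_of_ne hne with hlt | hgt
    · rw [ENNReal.ofReal_of_nonpos hlt.le] at hs
      have hpos := ENNReal.ofReal_pos.2 (neg_pos.2 hlt)
      rw [← hs] at hpos
      exact lt_irrefl _ hpos
    · have h2 : ENNReal.ofReal (-gF ξ u s) = 0 := ENNReal.ofReal_of_nonpos (by linarith)
      rw [h2] at hs
      have hpos := ENNReal.ofReal_pos.2 hgt
      rw [hs] at hpos
      exact lt_irrefl _ hpos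
  have hub0 : ∀ᵐ s ∂(volume : Measure ℝ), s ∈ Set.Ioo (0:ℝ) 1 → u s = 0 := by
    filter_upwards [hg0] with s hs hmem
    have hub' : ubF u s = 0 := by
      rcases mul_eq_zero.1 hs with h | h
      · exact absurd h (Real.exp_ne_zero _)
      · exact h
    rwa [ubF, Set.indicator_of_mem hmem] at hub'
  exact (ae_restrict_iff' measurableSet_Ioo).2 hub0
end

section
/- For every x > 0 satisfying tan x = 2ξx/(x² - ξ²) (with x ≠ ξ and cos x ≠ 0), the function u(ρ) = ξ sin(xρ) + x cos(xρ) is an eigenfunction of the operator (W u)(ρ) = (1/2)∫₀¹ exp(-ξ|ρ-ρ'|) u(ρ') dρ' with eigenvalue λ = ξ/(ξ² + x²). -/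
open Real

private lemma key_deriv (ε c x A B : ℝ) (t : ℝ) :
    HasDerivAt (fun t => Real.exp (ε*t + c) * (A * Real.sin (x*t) + B * Real.cos (x*t)))
      (Real.exp (ε*t + c) * ((ε*A - x*B) * Real.sin (x*t) + (ε*B + x*A) * Real.cos (x*t))) t := by
  have he : HasDerivAt (fun t : ℝ => Real.exp (ε*t + c)) (Real.exp (ε*t + c) * ε) t := by
    have h := (((hasDerivAt_id t).const_mul ε).add_const c).exp
    simpa using h
  have hs : HasDerivAt (fun t : ℝ => Real.sin (x*t)) (Real.cos (x*t) * x) t := by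
    have h := (Real.hasDerivAt_sin (x*t)).comp t ((hasDerivAt_id t).const_mul x)
    simpa [Function.comp_def] using h
  have hc : HasDerivAt (fun t : ℝ => Real.cos (x*t)) (-Real.sin (x*t) * x) t := by
    have h := (Real.hasDerivAt_cos (x*t)).comp t ((hasDerivAt_id t).const_mul x)
    simpa [Function.comp_def] using h
  have h := he.mul ((hs.const_mul A).add (hc.const_mul B))
  refine h.congr_deriv ?_
  simp only [Pi.add_apply]
  ring

theorem eigenfunction_of_exp_kernel (ξ x : ℝ) (hξ : 0 < ξ) (hx : 0 < x)
    (hxξ : x ≠ ξ) (hcos : Real.cos x ≠ 0)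
    (htan : Real.tan x = 2 * ξ * x / (x ^ 2 - ξ ^ 2))
    (u : ℝ → ℝ) (hu : ∀ ρ, u ρ = ξ * Real.sin (x * ρ) + x * Real.cos (x * ρ)) :
    ∀ ρ ∈ Set.Icc (0 : ℝ) 1,
      (1 / 2) * ∫ ρ' in (0 : ℝ)..1, Real.exp (-ξ * |ρ - ρ'|) * u ρ'
        = (ξ / (ξ ^ 2 + x ^ 2)) * u ρ := by
  intro ρ hρ
  obtain ⟨hρ0, hρ1⟩ := hρ
  have hs0 : (0:ℝ) < ξ^2 + x^2 := by positivity
  have hs0' : (ξ:ℝ)^2 + x^2 ≠ 0 := ne_of_gt hs0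
  have hxξ2 : x^2 - ξ^2 ≠ 0 := by
    intro h
    apply hxξ
    nlinarith
  have hkey : (x^2 - ξ^2) * Real.sin x - 2*ξ*x*Real.cos x = 0 := by
    rw [Real.tan_eq_sin_div_cos] at htan
    field_simp at htan
    linarith
  set A2 : ℝ := (x^2 - ξ^2)/(ξ^2 + x^2) with hA2
  set B2 : ℝ := -(2*ξ*x)/(ξ^2 + x^2) with hB2
  have hcont : Continuous (fun ρ' : ℝ =>
      Real.exp (-ξ * |ρ - ρ'|) * (ξ * Real.sin (x*ρ') + x * Real.cos (x*ρ'))) := by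
    fun_prop
  simp only [hu]
  rw [← intervalIntegral.integral_add_adjacent_intervals
      (hcont.intervalIntegrable 0 ρ) (hcont.intervalIntegrable ρ 1)]
  have I1 : (∫ ρ' in (0:ℝ)..ρ, Real.exp (-ξ * |ρ - ρ'|) * (ξ * Real.sin (x*ρ') + x * Real.cos (x*ρ')))
      = Real.exp (ξ*ρ + -(ξ*ρ)) * (1 * Real.sin (x*ρ) + 0 * Real.cos (x*ρ))
        - Real.exp (ξ*0 + -(ξ*ρ)) * (1 * Real.sin (x*0) + 0 * Real.cos (x*0)) := by
    rw [intervalIntegral.integral_congr (g := fun t =>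
        Real.exp (ξ*t + -(ξ*ρ)) * ((ξ*1 - x*0) * Real.sin (x*t) + (ξ*0 + x*1) * Real.cos (x*t)))]
    · exact intervalIntegral.integral_eq_sub_of_hasDerivAt
        (fun t _ => key_deriv ξ (-(ξ*ρ)) x 1 0 t)
        ((by fun_prop : Continuous (fun t : ℝ => Real.exp (ξ*t + -(ξ*ρ)) *
          ((ξ*1 - x*0) * Real.sin (x*t) + (ξ*0 + x*1) * Real.cos (x*t)))).intervalIntegrable 0 ρ)
    · intro t ht
      rw [Set.uIcc_of_le hρ0] at ht
      have habs : |ρ - t| = ρ - t := abs_of_nonneg (by linarith [ht.2])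
      simp only [habs]
      ring_nf
  have I2 : (∫ ρ' in (ρ:ℝ)..1, Real.exp (-ξ * |ρ - ρ'|) * (ξ * Real.sin (x*ρ') + x * Real.cos (x*ρ')))
      = Real.exp (-ξ*1 + ξ*ρ) * (A2 * Real.sin (x*1) + B2 * Real.cos (x*1))
        - Real.exp (-ξ*ρ + ξ*ρ) * (A2 * Real.sin (x*ρ) + B2 * Real.cos (x*ρ)) := by
    rw [intervalIntegral.integral_congr (g := fun t =>
        Real.exp (-ξ*t + ξ*ρ) * ((-ξ*A2 - x*B2) * Real.sin (x*t) + (-ξ*B2 + x*A2) * Real.cos (x*t)))]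
    · exact intervalIntegral.integral_eq_sub_of_hasDerivAt
        (fun t _ => key_deriv (-ξ) (ξ*ρ) x A2 B2 t)
        ((by fun_prop : Continuous (fun t : ℝ => Real.exp (-ξ*t + ξ*ρ) *
          ((-ξ*A2 - x*B2) * Real.sin (x*t) + (-ξ*B2 + x*A2) * Real.cos (x*t)))).intervalIntegrable ρ 1)
    · intro t ht
      rw [Set.uIcc_of_le hρ1] at ht
      have habs : |ρ - t| = t - ρ := by
        rw [abs_sub_comm]; exact abs_of_nonneg (by linarith [ht.1])
      have hA : -ξ*A2 - x*B2 = ξ := by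
        rw [hA2, hB2]; field_simp; ring
      have hB : -ξ*B2 + x*A2 = x := by
        rw [hA2, hB2]; field_simp; ring
      simp only [habs, hA, hB]
      ring_nf
  rw [I1, I2]
  have hzero : A2 * Real.sin (x*1) + B2 * Real.cos (x*1) = 0 := by
    rw [hA2, hB2, mul_one]
    field_simp
    linarith
  rw [hzero]
  simp only [mul_zero, mul_one, zero_mul, add_zero, zero_add]
  rw [hA2, hB2]
  simp only [mul_zero, Real.sin_zero, neg_mul, neg_add_cancel, add_neg_cancel, Real.exp_zero]
  field_simp
  ring
end

section
/- Every eigenvalue λ ≠ 0 of the integral operator with kernel (1/2)exp(-ξ|ρ-ρ'|) on L²(0,1) satisfies 0 < λ < 1/ξ. -/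
open MeasureTheory Real Set Function

lemma exp_int (c d a b : ℝ) (hc : c ≠ 0) (hab : a ≤ b) :
    ∫ t in Set.Ioc a b, Real.exp (c*t + d) =
      (Real.exp (c*b+d) - Real.exp (c*a+d))/c := by
  rw [← intervalIntegral.integral_of_le hab]
  rw [intervalIntegral.integral_eq_sub_of_hasDerivAt
    (f := fun t => Real.exp (c*t+d)/c) (f' := fun t => Real.exp (c*t+d))
    (fun x _ => by
      have h1 : HasDerivAt (fun t : ℝ => c*t+d) c x := by
        simpa using ((hasDerivAt_id x).const_mul c).add_const d
      have h2 := (h1.exp).div_const c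
      rw [mul_div_assoc, div_self hc, mul_one] at h2
      exact h2)
    ((Real.continuous_exp.comp (by continuity)).intervalIntegrable a b)]
  ring

lemma kdecomp (ξ : ℝ) (hξ : 0 < ξ) {ρ s : ℝ} (hρ : ρ ∈ Set.Ioo (0:ℝ) 1)
    (hs : s ∈ Set.Ioo (0:ℝ) 1) :
    (1/2 : ℝ) * Real.exp (-ξ * |ρ - s|) =
      (1/2) * (Real.exp (-ξ*ρ) * Real.exp (-ξ*s))
      + (Real.exp (-ξ*ρ) * Real.exp (-ξ*s)) *
        ∫ t in Set.Ioo (0:ℝ) 1,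
          ξ * Real.exp (2*ξ*t) * ((if t < ρ then (1:ℝ) else 0) * (if t < s then (1:ℝ) else 0)) := by
  set m := min ρ s with hm
  have hm0 : 0 < m := lt_min hρ.1 hs.1
  have hm1 : m ≤ 1 := le_trans (min_le_left _ _) hρ.2.le
  have habs : |ρ - s| = ρ + s - 2*m := by
    rcases le_total ρ s with h | h
    · rw [abs_of_nonpos (by linarith), hm, min_eq_left h]; ring
    · rw [abs_of_nonneg (by linarith), hm, min_eq_right h]; ring
  have hind : ∀ t : ℝ, ξ * Real.exp (2*ξ*t) * ((if t < ρ then (1:ℝ) else 0) * (if t < s then (1:ℝ) else 0))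
      = Set.indicator (Set.Iio m) (fun t => ξ * Real.exp (2*ξ*t)) t := by
    intro t
    by_cases h : t < m
    · rw [Set.indicator_of_mem (show t ∈ Set.Iio m from h),
        if_pos (lt_of_lt_of_le h (min_le_left _ _)),
        if_pos (lt_of_lt_of_le h (min_le_right _ _))]
      ring
    · rw [Set.indicator_of_notMem (show t ∉ Set.Iio m from h)]
      rcases not_and_or.mp (lt_min_iff.not.mp h) with h' | h'
      · rw [if_neg h']; ring
      · rw [if_neg h']; ring
  have hcalc : ∫ t in Set.Ioo (0:ℝ) 1,
      ξ * Real.exp (2*ξ*t) * ((if t < ρ then (1:ℝ) else 0) * (if t < s then (1:ℝ) else 0))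
      = (Real.exp (2*ξ*m) - 1)/2 := by
    calc ∫ t in Set.Ioo (0:ℝ) 1, ξ * Real.exp (2*ξ*t) * ((if t < ρ then (1:ℝ) else 0) * (if t < s then (1:ℝ) else 0))
        = ∫ t in Set.Ioo (0:ℝ) 1, Set.indicator (Set.Iio m) (fun t => ξ * Real.exp (2*ξ*t)) t := by
          exact integral_congr_ae (Filter.Eventually.of_forall fun t => hind t)
      _ = ∫ t in Set.Ioo (0:ℝ) 1 ∩ Set.Iio m, ξ * Real.exp (2*ξ*t) := by
          exact setIntegral_indicator measurableSet_Iio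
      _ = ∫ t in Set.Ioo (0:ℝ) m, ξ * Real.exp (2*ξ*t) := by
          rw [Set.Ioo_inter_Iio, min_eq_right hm1]
      _ = ξ * ∫ t in Set.Ioc (0:ℝ) m, Real.exp (2*ξ*t + 0) := by
          rw [integral_Ioc_eq_integral_Ioo, integral_const_mul]
          simp
      _ = ξ * ((Real.exp (2*ξ*m+0) - Real.exp (2*ξ*0+0))/(2*ξ)) := by
          rw [exp_int (2*ξ) 0 0 m (by positivity) hm0.le]
      _ = (Real.exp (2*ξ*m) - 1)/2 := by
          field_simp
          simp only [zero_mul, mul_zero, zero_add, add_zero, Real.exp_zero]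
  rw [hcalc]
  have hx : Real.exp (-ξ * |ρ - s|) = (Real.exp (-ξ*ρ) * Real.exp (-ξ*s)) * Real.exp (2*ξ*m) := by
    rw [← Real.exp_add, ← Real.exp_add]
    congr 1
    rw [habs]; ring
  rw [hx]; ring
lemma mbound (ξ : ℝ) (hξ : 0 < ξ) {ρ : ℝ} (hρ : ρ ∈ Set.Ioo (0:ℝ) 1) :
    ∫ s in Set.Ioo (0:ℝ) 1, Real.exp (-ξ * |ρ - s|) ≤ 2*(1 - Real.exp (-ξ))/ξ := by
  have hcont : Continuous (fun s : ℝ => Real.exp (-ξ * |ρ - s|)) := by continuity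
  have hsplit : ∫ s in Set.Ioo (0:ℝ) 1, Real.exp (-ξ * |ρ - s|)
      = (∫ s in Set.Ioc (0:ℝ) ρ, Real.exp (-ξ * |ρ - s|))
        + ∫ s in Set.Ioc ρ 1, Real.exp (-ξ * |ρ - s|) := by
    rw [← integral_Ioc_eq_integral_Ioo, ← Set.Ioc_union_Ioc_eq_Ioc hρ.1.le hρ.2.le,
      setIntegral_union (Set.Ioc_disjoint_Ioc_of_le le_rfl) measurableSet_Ioc
        (hcont.integrableOn_Ioc) (hcont.integrableOn_Ioc)]
  have h1 : ∫ s in Set.Ioc (0:ℝ) ρ, Real.exp (-ξ * |ρ - s|) ≤ (1 - Real.exp (-ξ))/ξ := by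
    have he : ∀ s ∈ Set.Ioc (0:ℝ) ρ, Real.exp (-ξ * |ρ - s|) = Real.exp (ξ*s + -(ξ*ρ)) := by
      intro s hs
      congr 1
      rw [abs_of_nonneg (by linarith [hs.2])]
      ring
    rw [setIntegral_congr_fun measurableSet_Ioc he, exp_int ξ (-(ξ*ρ)) 0 ρ hξ.ne' hρ.1.le]
    have e1 : Real.exp (ξ*ρ + -(ξ*ρ)) = 1 := by rw [show ξ*ρ + -(ξ*ρ) = 0 by ring, Real.exp_zero]
    rw [e1]
    gcongr
    nlinarith [hρ.2, hξ]
  have h2 : ∫ s in Set.Ioc ρ 1, Real.exp (-ξ * |ρ - s|) ≤ (1 - Real.exp (-ξ))/ξ := by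
    have he : ∀ s ∈ Set.Ioc ρ 1, Real.exp (-ξ * |ρ - s|) = Real.exp (-ξ*s + ξ*ρ) := by
      intro s hs
      congr 1
      rw [abs_of_nonpos (by linarith [hs.1])]
      ring
    rw [setIntegral_congr_fun measurableSet_Ioc he, exp_int (-ξ) (ξ*ρ) ρ 1 (by linarith) hρ.2.le]
    have e1 : Real.exp (-ξ*ρ + ξ*ρ) = 1 := by rw [show -ξ*ρ + ξ*ρ = 0 by ring, Real.exp_zero]
    rw [e1, show (Real.exp (-ξ*1 + ξ*ρ) - 1)/(-ξ) = (1 - Real.exp (-ξ*1 + ξ*ρ))/ξ by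
      rw [div_neg, ← neg_div, neg_sub]]
    gcongr
    nlinarith [hρ.1, hξ]
  rw [hsplit]
  have : 2*(1 - Real.exp (-ξ))/ξ = (1 - Real.exp (-ξ))/ξ + (1 - Real.exp (-ξ))/ξ := by ring
  linarith

lemma ite_abs_le_one {p : Prop} [Decidable p] : |if p then (1:ℝ) else 0| ≤ 1 := by
  split <;> norm_num

lemma ite_nonneg' {p : Prop} [Decidable p] : (0:ℝ) ≤ if p then (1:ℝ) else 0 := by
  split <;> norm_num

lemma kb2 (ξ : ℝ) (hξ : 0 < ξ) {t : ℝ} (ht : t ≤ 1) (p q : Prop) [Decidable p] [Decidable q] :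
    |ξ * Real.exp (2*ξ*t) * ((if p then (1:ℝ) else 0) * (if q then (1:ℝ) else 0))|
      ≤ ξ * Real.exp (2*ξ) := by
  have h2 : Real.exp (2*ξ*t) ≤ Real.exp (2*ξ) := by
    apply Real.exp_le_exp.mpr; nlinarith
  have h3 := Real.exp_pos (2*ξ*t)
  split_ifs <;> simp only [mul_one, mul_zero, abs_mul, abs_of_nonneg hξ.le,
    abs_of_nonneg h3.le, abs_zero, abs_one] <;> nlinarith

lemma kb1 (ξ : ℝ) (hξ : 0 < ξ) {t : ℝ} (ht : t ≤ 1) (p : Prop) [Decidable p] :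
    |ξ * Real.exp (2*ξ*t) * (if p then (1:ℝ) else 0)| ≤ ξ * Real.exp (2*ξ) := by
  have h2 : Real.exp (2*ξ*t) ≤ Real.exp (2*ξ) := by
    apply Real.exp_le_exp.mpr; nlinarith
  have h3 := Real.exp_pos (2*ξ*t)
  split_ifs <;> simp only [mul_one, mul_zero, abs_mul, abs_of_nonneg hξ.le,
    abs_of_nonneg h3.le, abs_zero, abs_one] <;> nlinarith

lemma int_fst {μ ν : Measure ℝ} [IsFiniteMeasure ν] [SFinite μ] {f : ℝ → ℝ}
    (hf : Integrable f μ) : Integrable (fun z : ℝ × ℝ => f z.1) (μ.prod ν) := by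
  simpa using hf.mul_prod (integrable_const (1:ℝ))
lemma int_snd {μ ν : Measure ℝ} [IsFiniteMeasure μ] [SFinite ν] {f : ℝ → ℝ}
    (hf : Integrable f ν) : Integrable (fun z : ℝ × ℝ => f z.2) (μ.prod ν) := by
  simpa using (integrable_const (1:ℝ)).mul_prod hf

lemma Qnonneg (ξ : ℝ) (hξ : 0 < ξ) (u : ℝ → ℝ)
    (hums : AEStronglyMeasurable u ((volume : Measure ℝ).restrict (Set.Ioo (0:ℝ) 1)))
    (hu1 : Integrable u ((volume : Measure ℝ).restrict (Set.Ioo (0:ℝ) 1))) :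
    0 ≤ ∫ ρ in Set.Ioo (0:ℝ) 1, u ρ *
        ∫ s in Set.Ioo (0:ℝ) 1, (1/2) * Real.exp (-ξ * |ρ - s|) * u s := by
  haveI : Fact ((volume : Measure ℝ) (Set.Ioo (0:ℝ) 1) < ⊤) := ⟨by simp⟩
  set μ := (volume : Measure ℝ).restrict (Set.Ioo (0:ℝ) 1) with hμ
  haveI : IsFiniteMeasure μ := by rw [hμ]; infer_instance
  have hμuniv : μ.real Set.univ = 1 := by
    rw [hμ]; simp
  have hmem : ∀ᵐ x ∂μ, x ∈ Set.Ioo (0:ℝ) 1 := ae_restrict_mem measurableSet_Ioo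
  have hpmem : ∀ᵐ z ∂(μ.prod μ), z.1 ∈ Set.Ioo (0:ℝ) 1 ∧ z.2 ∈ Set.Ioo (0:ℝ) 1 := by
    rw [hμ, Measure.prod_restrict]
    filter_upwards [ae_restrict_mem (measurableSet_Ioo.prod measurableSet_Ioo)] with z hz
    exact hz
  -- w
  set w : ℝ → ℝ := fun x => Real.exp (-ξ*x) * u x with hwdef
  have hwms : AEStronglyMeasurable w μ :=
    ((Real.continuous_exp.comp (by continuity)).aestronglyMeasurable).mul hums
  have hw1 : Integrable w μ := by
    refine Integrable.mono' hu1.norm hwms ?_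
    filter_upwards [hmem] with x hx
    have h1 : Real.exp (-ξ*x) ≤ 1 := Real.exp_le_one_iff.mpr (by nlinarith [hx.1])
    have h2 := Real.exp_pos (-ξ*x)
    simp only [hwdef, norm_mul, Real.norm_eq_abs, Real.abs_exp]
    nlinarith [abs_nonneg (u x)]
  set c : ℝ := ∫ s, w s ∂μ with hcdef
  -- g
  set g : ℝ → ℝ := fun t => ∫ s, (if t < s then (1:ℝ) else 0) * w s ∂μ with hgdef
  set Cg : ℝ := ∫ s, ‖w s‖ ∂μ with hCgdef
  have hCg0 : 0 ≤ Cg := integral_nonneg fun s => norm_nonneg _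
  have hCg : ∀ t, |g t| ≤ Cg := by
    intro t
    rw [← Real.norm_eq_abs]
    refine le_trans (norm_integral_le_integral_norm _) ?_
    refine integral_mono_of_nonneg (Filter.Eventually.of_forall fun s => norm_nonneg _)
      hw1.norm (Filter.Eventually.of_forall fun s => ?_)
    simp only [norm_mul]
    calc ‖if t < s then (1:ℝ) else 0‖ * ‖w s‖ ≤ 1 * ‖w s‖ := by
          apply mul_le_mul_of_nonneg_right _ (norm_nonneg _)
          simpa [Real.norm_eq_abs] using (show |if t < s then (1:ℝ) else 0| ≤ 1 by
            split <;> norm_num)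
      _ = ‖w s‖ := one_mul _
  have hgms : AEStronglyMeasurable g μ := by
    have m1 : Measurable fun z : ℝ × ℝ => (if z.1 < z.2 then (1:ℝ) else 0) :=
      Measurable.ite (measurableSet_lt measurable_fst measurable_snd)
        measurable_const measurable_const
    exact ((m1.aestronglyMeasurable).mul hwms.comp_snd).integral_prod_right'
  -- P
  set P : ℝ → ℝ := fun ρ => ∫ t, (ξ * Real.exp (2*ξ*t) * (if t < ρ then (1:ℝ) else 0)) * g t ∂μ
    with hPdef
  have hPms : AEStronglyMeasurable P μ := by
    have m1 : Measurable fun z : ℝ × ℝ =>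
        ξ * Real.exp (2*ξ*z.2) * (if z.2 < z.1 then (1:ℝ) else 0) := by
      refine Measurable.mul (Measurable.mul measurable_const ?_) ?_
      · exact Real.measurable_exp.comp (measurable_snd.const_mul (2*ξ))
      · exact Measurable.ite (measurableSet_lt measurable_snd measurable_fst)
          measurable_const measurable_const
    exact ((m1.aestronglyMeasurable).mul hgms.comp_snd).integral_prod_right'
  have hFub1 : ∀ ρ : ℝ, Integrable (Function.uncurry fun s t =>
      (ξ * Real.exp (2*ξ*t) * ((if t < ρ then (1:ℝ) else 0) * (if t < s then (1:ℝ) else 0))) * w s)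
      (μ.prod μ) := by
    intro ρ
    have m1 : Measurable fun z : ℝ × ℝ =>
        ξ * Real.exp (2*ξ*z.2) * ((if z.2 < ρ then (1:ℝ) else 0) * (if z.2 < z.1 then (1:ℝ) else 0)) := by
      refine Measurable.mul (Measurable.mul measurable_const ?_) (Measurable.mul ?_ ?_)
      · exact Real.measurable_exp.comp (measurable_snd.const_mul (2*ξ))
      · exact Measurable.ite (measurableSet_lt measurable_snd measurable_const)
          measurable_const measurable_const
      · exact Measurable.ite (measurableSet_lt measurable_snd measurable_fst)
          measurable_const measurable_const
    have hms : AEStronglyMeasurable (Function.uncurry fun s t =>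
        (ξ * Real.exp (2*ξ*t) * ((if t < ρ then (1:ℝ) else 0) * (if t < s then (1:ℝ) else 0))) * w s)
        (μ.prod μ) := (m1.aestronglyMeasurable).mul hwms.comp_fst
    refine Integrable.mono' (g := fun z : ℝ × ℝ => (ξ * Real.exp (2*ξ)) * ‖w z.1‖)
      (int_fst (hw1.norm.const_mul _)) hms ?_
    filter_upwards [hpmem] with z hz
    have h1 := kb2 ξ hξ hz.2.2.le (z.2 < ρ) (z.2 < z.1)
    simp only [Function.uncurry]
    rw [norm_mul]
    simp only [Real.norm_eq_abs]
    exact mul_le_mul_of_nonneg_right h1 (abs_nonneg _)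
  have hFub2 : Integrable (Function.uncurry fun ρ t =>
      w ρ * ((ξ * Real.exp (2*ξ*t) * (if t < ρ then (1:ℝ) else 0)) * g t)) (μ.prod μ) := by
    have m1 : Measurable fun z : ℝ × ℝ =>
        ξ * Real.exp (2*ξ*z.2) * (if z.2 < z.1 then (1:ℝ) else 0) := by
      refine Measurable.mul (Measurable.mul measurable_const ?_) ?_
      · exact Real.measurable_exp.comp (measurable_snd.const_mul (2*ξ))
      · exact Measurable.ite (measurableSet_lt measurable_snd measurable_fst)
          measurable_const measurable_const
    have hms : AEStronglyMeasurable (Function.uncurry fun ρ t =>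
        w ρ * ((ξ * Real.exp (2*ξ*t) * (if t < ρ then (1:ℝ) else 0)) * g t)) (μ.prod μ) :=
      hwms.comp_fst.mul ((m1.aestronglyMeasurable).mul hgms.comp_snd)
    refine Integrable.mono' (g := fun z : ℝ × ℝ => ‖w z.1‖ * (ξ * Real.exp (2*ξ) * Cg))
      (hw1.norm.mul_prod (integrable_const _)) hms ?_
    filter_upwards [hpmem] with z hz
    have h1 := kb1 ξ hξ hz.2.2.le (z.2 < z.1)
    have h2 := hCg z.2
    simp only [Function.uncurry]
    rw [norm_mul]
    simp only [Real.norm_eq_abs]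
    refine mul_le_mul_of_nonneg_left ?_ (abs_nonneg _)
    rw [abs_mul]
    exact mul_le_mul h1 h2 (abs_nonneg _) (by positivity)
  have hwP : Integrable (fun ρ => w ρ * P ρ) μ := by
    refine Integrable.mono' (g := fun ρ => ‖w ρ‖ * (ξ * Real.exp (2*ξ) * Cg))
      (hw1.norm.mul_const _) (hwms.mul hPms) ?_
    refine Filter.Eventually.of_forall fun ρ => ?_
    have hb : ‖P ρ‖ ≤ ξ * Real.exp (2*ξ) * Cg := by
      refine le_trans (norm_integral_le_of_norm_le_const
        (C := ξ * Real.exp (2*ξ) * Cg) ?_) ?_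
      · filter_upwards [hmem] with t ht
        have h1 := kb1 ξ hξ ht.2.le (t < ρ)
        have h2 := hCg t
        rw [norm_mul]
        simp only [Real.norm_eq_abs]
        exact mul_le_mul h1 h2 (abs_nonneg _) (by positivity)
      · rw [hμuniv, mul_one]
    calc ‖w ρ * P ρ‖ = ‖w ρ‖ * ‖P ρ‖ := norm_mul _ _
      _ ≤ ‖w ρ‖ * (ξ * Real.exp (2*ξ) * Cg) := mul_le_mul_of_nonneg_left hb (norm_nonneg _)
  -- main decomposition of the inner integral
  have hF : ∀ ρ ∈ Set.Ioo (0:ℝ) 1,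
      (∫ s, (1/2) * Real.exp (-ξ * |ρ - s|) * u s ∂μ)
        = Real.exp (-ξ*ρ) * ((1/2) * c + P ρ) := by
    intro ρ hρ
    have e0 : ∀ s ∈ Set.Ioo (0:ℝ) 1, (1/2) * Real.exp (-ξ * |ρ - s|) * u s
        = Real.exp (-ξ*ρ) * ((1/2) * w s
            + ∫ t, (ξ * Real.exp (2*ξ*t) * ((if t < ρ then (1:ℝ) else 0) * (if t < s then (1:ℝ) else 0))) * w s ∂μ) := by
      intro s hs
      rw [kdecomp ξ hξ hρ hs]
      rw [show (∫ t, (ξ * Real.exp (2*ξ*t) * ((if t < ρ then (1:ℝ) else 0) * (if t < s then (1:ℝ) else 0))) * w s ∂μ)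
        = (∫ t in Set.Ioo (0:ℝ) 1, ξ * Real.exp (2*ξ*t) * ((if t < ρ then (1:ℝ) else 0) * (if t < s then (1:ℝ) else 0))) * w s
        from integral_mul_const _ _]
      simp only [hwdef]
      ring
    rw [show (∫ s, (1/2) * Real.exp (-ξ * |ρ - s|) * u s ∂μ)
      = ∫ s in Set.Ioo (0:ℝ) 1, (1/2) * Real.exp (-ξ * |ρ - s|) * u s from rfl]
    rw [setIntegral_congr_fun measurableSet_Ioo e0]
    rw [integral_const_mul]
    congr 1
    have hadd2 : Integrable (fun s => ∫ t,
        (ξ * Real.exp (2*ξ*t) * ((if t < ρ then (1:ℝ) else 0) * (if t < s then (1:ℝ) else 0))) * w s ∂μ) μ :=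
      (hFub1 ρ).integral_prod_left
    rw [integral_add (hw1.const_mul _) hadd2]
    congr 1
    · exact integral_const_mul _ _
    · rw [integral_integral_swap (hFub1 ρ)]
      refine integral_congr_ae (Filter.Eventually.of_forall fun t => ?_)
      calc (∫ s, (ξ * Real.exp (2*ξ*t) * ((if t < ρ then (1:ℝ) else 0) * (if t < s then (1:ℝ) else 0))) * w s ∂μ)
          = ∫ s, (ξ * Real.exp (2*ξ*t) * (if t < ρ then (1:ℝ) else 0)) * ((if t < s then (1:ℝ) else 0) * w s) ∂μ :=
            integral_congr_ae (Filter.Eventually.of_forall fun s => by ring)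
        _ = (ξ * Real.exp (2*ξ*t) * (if t < ρ then (1:ℝ) else 0)) * g t := integral_const_mul _ _
  -- assembly
  have key : (∫ ρ, u ρ * ∫ s, (1/2) * Real.exp (-ξ * |ρ - s|) * u s ∂μ ∂μ)
      = (1/2) * c^2 + ∫ t, ξ * Real.exp (2*ξ*t) * (g t)^2 ∂μ := by
    have e1 : ∀ ρ ∈ Set.Ioo (0:ℝ) 1, u ρ * (∫ s, (1/2) * Real.exp (-ξ * |ρ - s|) * u s ∂μ)
        = (1/2)*c * w ρ + w ρ * P ρ := by
      intro ρ hρ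
      rw [hF ρ hρ]
      simp only [hwdef]
      ring
    rw [show (∫ ρ, u ρ * ∫ s, (1/2) * Real.exp (-ξ * |ρ - s|) * u s ∂μ ∂μ)
      = ∫ ρ in Set.Ioo (0:ℝ) 1, u ρ * ∫ s, (1/2) * Real.exp (-ξ * |ρ - s|) * u s ∂μ from rfl]
    rw [setIntegral_congr_fun measurableSet_Ioo e1]
    rw [integral_add (hw1.const_mul _) hwP]
    congr 1
    · rw [integral_const_mul]
      ring
    · have e2 : (fun ρ => w ρ * P ρ) = fun ρ =>
          ∫ t, w ρ * ((ξ * Real.exp (2*ξ*t) * (if t < ρ then (1:ℝ) else 0)) * g t) ∂μ := by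
        funext ρ
        rw [← integral_const_mul]
      rw [e2, integral_integral_swap hFub2]
      refine integral_congr_ae (Filter.Eventually.of_forall fun t => ?_)
      calc (∫ ρ, w ρ * ((ξ * Real.exp (2*ξ*t) * (if t < ρ then (1:ℝ) else 0)) * g t) ∂μ)
          = ∫ ρ, (ξ * Real.exp (2*ξ*t) * g t) * ((if t < ρ then (1:ℝ) else 0) * w ρ) ∂μ :=
            integral_congr_ae (Filter.Eventually.of_forall fun ρ => by ring)
        _ = (ξ * Real.exp (2*ξ*t) * g t) * g t := integral_const_mul _ _
        _ = ξ * Real.exp (2*ξ*t) * (g t)^2 := by ring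
  rw [key]
  have h1 : 0 ≤ (1/2) * c^2 := by positivity
  have h2 : 0 ≤ ∫ t, ξ * Real.exp (2*ξ*t) * (g t)^2 ∂μ :=
    integral_nonneg fun t => mul_nonneg (mul_nonneg hξ.le (Real.exp_pos _).le) (sq_nonneg _)
  linarith
lemma Qupper (ξ : ℝ) (hξ : 0 < ξ) (u : ℝ → ℝ)
    (hums : AEStronglyMeasurable u ((volume : Measure ℝ).restrict (Set.Ioo (0:ℝ) 1)))
    (hu2 : Integrable (fun x => u x ^ 2) ((volume : Measure ℝ).restrict (Set.Ioo (0:ℝ) 1)))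
    (hQint : Integrable (fun ρ => u ρ *
        ∫ s in Set.Ioo (0:ℝ) 1, (1/2) * Real.exp (-ξ * |ρ - s|) * u s)
      ((volume : Measure ℝ).restrict (Set.Ioo (0:ℝ) 1))) :
    (∫ ρ in Set.Ioo (0:ℝ) 1, u ρ *
        ∫ s in Set.Ioo (0:ℝ) 1, (1/2) * Real.exp (-ξ * |ρ - s|) * u s)
      ≤ ((1 - Real.exp (-ξ))/ξ) * ∫ ρ in Set.Ioo (0:ℝ) 1, u ρ ^ 2 := by
  haveI : Fact ((volume : Measure ℝ) (Set.Ioo (0:ℝ) 1) < ⊤) := ⟨by simp⟩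
  set μ := (volume : Measure ℝ).restrict (Set.Ioo (0:ℝ) 1) with hμ
  haveI : IsFiniteMeasure μ := by rw [hμ]; infer_instance
  have hμuniv : μ.real Set.univ = 1 := by rw [hμ]; simp
  have hkc : ∀ ρ : ℝ, Continuous (fun s : ℝ => Real.exp (-ξ * |ρ - s|)) := fun ρ =>
    Real.continuous_exp.comp (continuous_const.mul ((continuous_const.sub continuous_id).abs))
  have hexp_le : ∀ ρ s : ℝ, Real.exp (-ξ * |ρ - s|) ≤ 1 :=
    fun ρ s => Real.exp_le_one_iff.mpr (by nlinarith [abs_nonneg (ρ - s)])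
  -- m
  set m : ℝ → ℝ := fun ρ => ∫ s, Real.exp (-ξ * |ρ - s|) ∂μ with hmdef
  have hmms : AEStronglyMeasurable m μ := by
    have : Continuous (fun z : ℝ × ℝ => Real.exp (-ξ * |z.1 - z.2|)) :=
      Real.continuous_exp.comp (continuous_const.mul ((continuous_fst.sub continuous_snd).abs))
    exact (this.aestronglyMeasurable).integral_prod_right'
  have hm_le1 : ∀ ρ : ℝ, |m ρ| ≤ 1 := by
    intro ρ
    rw [← Real.norm_eq_abs]
    refine le_trans (norm_integral_le_of_norm_le_const (C := 1) ?_) (by rw [hμuniv, mul_one])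
    refine Filter.Eventually.of_forall fun s => ?_
    rw [Real.norm_eq_abs, abs_of_nonneg (Real.exp_pos _).le]
    exact hexp_le ρ s
  -- inner integrability facts
  have hint_inner : ∀ ρ : ℝ, Integrable (fun s => Real.exp (-ξ * |ρ - s|) * u s ^ 2) μ := by
    intro ρ
    refine Integrable.mono' hu2 (((hkc ρ).aestronglyMeasurable).mul hu2.1) ?_
    filter_upwards with s
    have hn : ‖Real.exp (-ξ * |ρ - s|) * u s ^ 2‖ = Real.exp (-ξ * |ρ - s|) * u s ^ 2 := by
      rw [Real.norm_eq_abs, abs_of_nonneg (by positivity)]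
    rw [hn]
    nlinarith [hexp_le ρ s, sq_nonneg (u s)]
  have hint_ker : ∀ ρ : ℝ, Integrable (fun s => u ρ * ((1/2) * Real.exp (-ξ * |ρ - s|) * u s)) μ := by
    intro ρ
    have haes : AEStronglyMeasurable (fun s => u ρ * ((1/2) * Real.exp (-ξ * |ρ - s|) * u s)) μ := by
      have hc : Continuous (fun s : ℝ => u ρ * ((1/2) * Real.exp (-ξ * |ρ - s|))) :=
        continuous_const.mul (continuous_const.mul (hkc ρ))
      have := (hc.aestronglyMeasurable (μ := μ)).mul hums
      refine this.congr ?_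
      filter_upwards with s
      simp only [Pi.mul_apply]
      ring
    refine Integrable.mono' (hu2.norm.add (integrable_const (|u ρ|^2)))
      haes ?_
    filter_upwards with s
    simp only [Pi.add_apply, Real.norm_eq_abs]
    have h1 : |u ρ * ((1/2) * Real.exp (-ξ * |ρ - s|) * u s)| ≤ |u ρ| * |u s| := by
      rw [abs_mul]
      refine mul_le_mul_of_nonneg_left ?_ (abs_nonneg _)
      rw [abs_mul, abs_mul, abs_of_nonneg (Real.exp_pos (-ξ * |ρ - s|)).le,
        show |(1:ℝ)/2| = 1/2 by norm_num]
      have := hexp_le ρ s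
      have := Real.exp_pos (-ξ * |ρ - s|)
      nlinarith [abs_nonneg (u s)]
    have h2 : |u ρ| * |u s| ≤ |u s ^ 2| + |u ρ| ^ 2 := by
      have e : |u s ^ 2| = u s ^ 2 := abs_of_nonneg (sq_nonneg _)
      rw [e]
      nlinarith [sq_nonneg (|u ρ| - |u s|), sq_abs (u s), abs_nonneg (u ρ), abs_nonneg (u s)]
    linarith
  -- pointwise AM-GM bound
  have hAM : ∀ ρ ∈ Set.Ioo (0:ℝ) 1, u ρ * (∫ s, (1/2) * Real.exp (-ξ * |ρ - s|) * u s ∂μ)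
      ≤ (1/4) * (u ρ ^ 2 * m ρ) + (1/4) * ∫ s, Real.exp (-ξ * |ρ - s|) * u s ^ 2 ∂μ := by
    intro ρ _
    have hL : u ρ * (∫ s, (1/2) * Real.exp (-ξ * |ρ - s|) * u s ∂μ)
        = ∫ s, u ρ * ((1/2) * Real.exp (-ξ * |ρ - s|) * u s) ∂μ := (integral_const_mul _ _).symm
    rw [hL]
    have int1 : Integrable (fun s => (u ρ ^ 2 * (1/4)) * Real.exp (-ξ * |ρ - s|)) μ := by
      refine Integrable.mono' (integrable_const (|u ρ ^ 2 * (1/4)|))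
        ((continuous_const.mul (hkc ρ)).aestronglyMeasurable) ?_
      filter_upwards with s
      rw [Real.norm_eq_abs, abs_mul, abs_of_nonneg (Real.exp_pos (-ξ * |ρ - s|)).le]
      nlinarith [hexp_le ρ s, Real.exp_pos (-ξ * |ρ - s|), abs_nonneg (u ρ ^ 2 * (1/4))]
    have int2 : Integrable (fun s => (1/4) * (Real.exp (-ξ * |ρ - s|) * u s ^ 2)) μ :=
      (hint_inner ρ).const_mul _
    have hle : (fun s => u ρ * ((1/2) * Real.exp (-ξ * |ρ - s|) * u s))
        ≤ fun s => (u ρ ^ 2 * (1/4)) * Real.exp (-ξ * |ρ - s|)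
            + (1/4) * (Real.exp (-ξ * |ρ - s|) * u s ^ 2) := by
      intro s
      nlinarith [mul_nonneg (Real.exp_pos (-ξ * |ρ - s|)).le (sq_nonneg (u ρ - u s))]
    refine le_trans (integral_mono (hint_ker ρ) (int1.add int2) hle) ?_
    simp only [Pi.add_apply]
    rw [integral_add int1 int2, integral_const_mul, integral_const_mul]
    exact le_of_eq (by ring)
  -- Fubini for the second term
  have hFub3 : Integrable (Function.uncurry fun ρ s => Real.exp (-ξ * |ρ - s|) * u s ^ 2)
      (μ.prod μ) := by
    have hc : Continuous (fun z : ℝ × ℝ => Real.exp (-ξ * |z.1 - z.2|)) :=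
      Real.continuous_exp.comp (continuous_const.mul ((continuous_fst.sub continuous_snd).abs))
    refine Integrable.mono' (g := fun z : ℝ × ℝ => u z.2 ^ 2) (int_snd hu2)
      ((hc.aestronglyMeasurable).mul hu2.1.comp_snd) ?_
    filter_upwards with z
    have hn : ‖Function.uncurry (fun ρ s => Real.exp (-ξ * |ρ - s|) * u s ^ 2) z‖
        = Real.exp (-ξ * |z.1 - z.2|) * u z.2 ^ 2 := by
      simp only [Function.uncurry]
      rw [Real.norm_eq_abs, abs_of_nonneg (by positivity)]
    rw [hn]
    nlinarith [hexp_le z.1 z.2, sq_nonneg (u z.2)]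
  have hswap : (∫ ρ, (∫ s, Real.exp (-ξ * |ρ - s|) * u s ^ 2 ∂μ) ∂μ)
      = ∫ s, u s ^ 2 * m s ∂μ := by
    rw [integral_integral_swap hFub3]
    refine integral_congr_ae (Filter.Eventually.of_forall fun s => ?_)
    calc (∫ ρ, Real.exp (-ξ * |ρ - s|) * u s ^ 2 ∂μ)
        = ∫ ρ, u s ^ 2 * Real.exp (-ξ * |s - ρ|) ∂μ :=
          integral_congr_ae (Filter.Eventually.of_forall fun ρ => by
            show Real.exp (-ξ * |ρ - s|) * u s ^ 2 = u s ^ 2 * Real.exp (-ξ * |s - ρ|)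
            rw [abs_sub_comm]; ring)
      _ = u s ^ 2 * m s := integral_const_mul _ _
  -- integrability of the two pieces
  have hint_m : Integrable (fun ρ => u ρ ^ 2 * m ρ) μ := by
    refine Integrable.mono' hu2 (hu2.1.mul hmms) ?_
    filter_upwards with ρ
    rw [Real.norm_eq_abs, abs_mul]
    have hh : |u ρ ^ 2| = u ρ ^ 2 := abs_of_nonneg (sq_nonneg _)
    rw [hh]
    nlinarith [hm_le1 ρ, sq_nonneg (u ρ), abs_nonneg (m ρ)]
  have hint_inner2 : Integrable (fun ρ => ∫ s, Real.exp (-ξ * |ρ - s|) * u s ^ 2 ∂μ) μ :=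
    hFub3.integral_prod_left
  -- chain
  have hmem : ∀ᵐ x ∂μ, x ∈ Set.Ioo (0:ℝ) 1 := ae_restrict_mem measurableSet_Ioo
  calc (∫ ρ, u ρ * (∫ s, (1/2) * Real.exp (-ξ * |ρ - s|) * u s ∂μ) ∂μ)
      ≤ ∫ ρ, ((1/4) * (u ρ ^ 2 * m ρ) + (1/4) * ∫ s, Real.exp (-ξ * |ρ - s|) * u s ^ 2 ∂μ) ∂μ := by
        refine integral_mono_ae hQint ((hint_m.const_mul _).add (hint_inner2.const_mul _)) ?_
        filter_upwards [hmem] with ρ hρ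
        exact hAM ρ hρ
    _ = (1/4) * (∫ ρ, u ρ ^ 2 * m ρ ∂μ) + (1/4) * ∫ ρ, (∫ s, Real.exp (-ξ * |ρ - s|) * u s ^ 2 ∂μ) ∂μ := by
        rw [integral_add (hint_m.const_mul _) (hint_inner2.const_mul _),
          integral_const_mul, integral_const_mul]
    _ = (1/2) * ∫ ρ, u ρ ^ 2 * m ρ ∂μ := by
        rw [hswap]; ring
    _ ≤ (1/2) * ∫ ρ, u ρ ^ 2 * (2*(1 - Real.exp (-ξ))/ξ) ∂μ := by
        refine mul_le_mul_of_nonneg_left ?_ (by norm_num)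
        refine integral_mono_ae hint_m (hu2.mul_const _) ?_
        filter_upwards [hmem] with ρ hρ
        exact mul_le_mul_of_nonneg_left (mbound ξ hξ hρ) (sq_nonneg _)
    _ = ((1 - Real.exp (-ξ))/ξ) * ∫ ρ, u ρ ^ 2 ∂μ := by
        rw [integral_mul_const]
        ring

theorem eigenvalue_bounds (ξ lam : ℝ) (hξ : 0 < ξ) (u : ℝ → ℝ)
    (hu : MemLp u 2 (volume.restrict (Set.Ioo (0 : ℝ) 1)))
    (hu0 : ¬ (∀ᵐ ρ ∂(volume.restrict (Set.Ioo (0 : ℝ) 1)), u ρ = 0))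
    (hlam : lam ≠ 0)
    (heig : ∀ᵐ ρ ∂(volume.restrict (Set.Ioo (0 : ℝ) 1)),
      ∫ ρ' in Set.Ioo (0 : ℝ) 1, (1 / 2) * Real.exp (-ξ * |ρ - ρ'|) * u ρ'
        = lam * u ρ) :
    0 < lam ∧ lam < 1 / ξ := by
  haveI : Fact ((volume : Measure ℝ) (Set.Ioo (0:ℝ) 1) < ⊤) := ⟨by simp⟩
  have hums : AEStronglyMeasurable u ((volume : Measure ℝ).restrict (Set.Ioo (0:ℝ) 1)) :=
    hu.aestronglyMeasurable
  have hu2 : Integrable (fun x => u x ^ 2) ((volume : Measure ℝ).restrict (Set.Ioo (0:ℝ) 1)) :=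
    hu.integrable_sq
  have hu1 : Integrable u ((volume : Measure ℝ).restrict (Set.Ioo (0:ℝ) 1)) :=
    hu.integrable one_le_two
  have hupos : 0 < ∫ ρ in Set.Ioo (0:ℝ) 1, u ρ ^ 2 := by
    have hnn : 0 ≤ ∫ ρ in Set.Ioo (0:ℝ) 1, u ρ ^ 2 := integral_nonneg fun x => sq_nonneg _
    rcases hnn.lt_or_eq with h | h
    · exact h
    · exfalso
      apply hu0
      have h0 := (integral_eq_zero_iff_of_nonneg_ae
        (Filter.Eventually.of_forall fun x => sq_nonneg (u x)) hu2).mp h.symm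
      filter_upwards [h0] with x hx
      have hx' : u x ^ 2 = 0 := by simpa using hx
      exact pow_eq_zero_iff two_ne_zero |>.mp hx'
  have hQeq : (∫ ρ in Set.Ioo (0:ℝ) 1, u ρ *
      ∫ s in Set.Ioo (0:ℝ) 1, (1/2) * Real.exp (-ξ * |ρ - s|) * u s)
      = lam * ∫ ρ in Set.Ioo (0:ℝ) 1, u ρ ^ 2 := by
    rw [← integral_const_mul]
    refine integral_congr_ae ?_
    filter_upwards [heig] with ρ hρ
    rw [hρ]
    ring
  have hQint : Integrable (fun ρ => u ρ *
      ∫ s in Set.Ioo (0:ℝ) 1, (1/2) * Real.exp (-ξ * |ρ - s|) * u s)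
      ((volume : Measure ℝ).restrict (Set.Ioo (0:ℝ) 1)) := by
    refine (hu2.const_mul lam).congr ?_
    filter_upwards [heig] with ρ hρ
    rw [hρ]
    ring
  have h0 := Qnonneg ξ hξ u hums hu1
  have hup := Qupper ξ hξ u hums hu2 hQint
  rw [hQeq] at h0 hup
  have hlampos : 0 < lam := by
    rcases lt_or_ge 0 lam with h | h
    · exact h
    · exfalso
      have hlt : lam < 0 := lt_of_le_of_ne h hlam
      nlinarith
  refine ⟨hlampos, ?_⟩
  have hlt : ((1 - Real.exp (-ξ))/ξ) * (∫ ρ in Set.Ioo (0:ℝ) 1, u ρ ^ 2)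
      < (1/ξ) * ∫ ρ in Set.Ioo (0:ℝ) 1, u ρ ^ 2 := by
    refine mul_lt_mul_of_pos_right ?_ hupos
    gcongr
    nlinarith [Real.exp_pos (-ξ)]
  exact (mul_lt_mul_iff_left₀ hupos).mp (lt_of_le_of_lt hup hlt)
end
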